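/- Let t > 0. Then for every s ∈ ℝ and every ξ ∈ ℝ with ξ ≠ 0: (1/4) ∫_{ℝ} e^{−2πi r ξ} · 1_{[−t,t]}(s + r/2) · 1_{[−t,t]}(s − r/2) dr = 1_{\{|s| ≤ t\}} · sin(4π(t − |s|)ξ)/(4πξ). (This is the Wigner-kernel density κ_t^{(1)}(s, ξ) of the one-dimensional wave propagator with multiplier sin(2π|ξ|t)/(2π|ξ|), whose Wigner kernel is δ(ξ−η) κ_t^{(1)}(x−y, ξ).) -/

import Mathlib

open MeasureTheory Complex
open scoped Real

noncomputable section

/-- **Wigner-kernel density of the one-dimensional wave propagator.** For `t > 0`,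
`s ∈ ℝ`, `ξ ≠ 0`:
`(1/4)∫ e^{−2πi rξ} 1_{[−t,t]}(s+r/2) 1_{[−t,t]}(s−r/2) dr
  = 1_{|s|≤t} sin(4π(t−|s|)ξ)/(4πξ)`. -/
theorem wigner_kernel_wave_1d
    (t : ℝ) (ht : 0 < t) (s ξ : ℝ) (hξ : ξ ≠ 0) :
    (1 / 4 : ℂ) * ∫ r : ℝ, Complex.exp (-(2 * π * r * ξ) * Complex.I) *
        (Set.Icc (-t) t).indicator (fun _ => (1 : ℂ)) (s + r / 2) *
        (Set.Icc (-t) t).indicator (fun _ => (1 : ℂ)) (s - r / 2)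
      = if |s| ≤ t then ((Real.sin (4 * π * (t - |s|) * ξ) / (4 * π * ξ) : ℝ) : ℂ)
        else 0 := by
  have hπ : (π : ℝ) ≠ 0 := Real.pi_ne_zero
  set a : ℝ := 2 * t - 2 * |s| with ha
  clear_value a
  have mem : ∀ r : ℝ, (s + r / 2 ∈ Set.Icc (-t) t ∧ s - r / 2 ∈ Set.Icc (-t) t)
      ↔ r ∈ Set.Icc (-a) a := by
    intro r
    simp only [Set.mem_Icc, ha]
    rcases abs_cases s with ⟨h1, h2⟩ | ⟨h1, h2⟩ <;> rw [h1] <;>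
      (constructor
       · rintro ⟨⟨u1, u2⟩, u3, u4⟩; exact ⟨by linarith, by linarith⟩
       · rintro ⟨u1, u2⟩; exact ⟨⟨by linarith, by linarith⟩, by linarith, by linarith⟩)
  have key : ∀ r : ℝ,
      Complex.exp (-(2 * π * r * ξ) * Complex.I) *
        (Set.Icc (-t) t).indicator (fun _ => (1 : ℂ)) (s + r / 2) *
        (Set.Icc (-t) t).indicator (fun _ => (1 : ℂ)) (s - r / 2)
      = (Set.Icc (-a) a).indicator
          (fun r => Complex.exp (-(2 * π * r * ξ) * Complex.I)) r := by
    intro r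
    by_cases h : r ∈ Set.Icc (-a) a
    · obtain ⟨h1, h2⟩ := (mem r).mpr h
      rw [Set.indicator_of_mem h, Set.indicator_of_mem h1, Set.indicator_of_mem h2]
      ring
    · rw [Set.indicator_of_notMem h]
      rcases not_and_or.mp (fun hh => h ((mem r).mp hh)) with h1 | h2
      · rw [Set.indicator_of_notMem h1]; ring
      · rw [Set.indicator_of_notMem h2]; ring
  simp_rw [key]
  rw [MeasureTheory.integral_indicator measurableSet_Icc]
  by_cases hst : |s| ≤ t
  · rw [if_pos hst]
    have h0 : (0 : ℝ) ≤ a := by simp only [ha]; linarith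
    have hle : -a ≤ a := by linarith
    set c : ℂ := -(2 * π * ξ) * Complex.I with hc
    have hcne : c ≠ 0 := by
      simp [hc, Complex.I_ne_zero, hπ, hξ, Real.pi_ne_zero, mul_eq_zero, Complex.ext_iff]
    have hint : ∫ r in Set.Icc (-a) a, Complex.exp (-(2 * π * r * ξ) * Complex.I)
        = ∫ r in (-a)..a, Complex.exp (c * r) := by
      rw [MeasureTheory.integral_Icc_eq_integral_Ioc,
        ← intervalIntegral.integral_of_le hle]
      apply intervalIntegral.integral_congr
      intro r _
      rw [hc]
      norm_num
      ring_nf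
    rw [hint, integral_exp_mul_complex hcne]
    have e1 : c * a = -((2 * π * a * ξ : ℝ) : ℂ) * Complex.I := by
      push_cast [hc]; ring
    have e2 : c * (-a : ℝ) = ((2 * π * a * ξ : ℝ) : ℂ) * Complex.I := by
      push_cast [hc]; ring
    rw [e1, e2]
    rw [show (-((2 * π * a * ξ : ℝ) : ℂ)) * Complex.I
        = ((-(2 * π * a * ξ) : ℝ) : ℂ) * Complex.I by push_cast; ring]
    rw [Complex.exp_mul_I, Complex.exp_mul_I]
    have harg : 4 * π * (t - |s|) * ξ = 2 * π * a * ξ := by rw [ha]; ring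
    rw [harg]
    simp only [Complex.cos_ofReal_re, ← Complex.ofReal_cos, ← Complex.ofReal_sin,
      Real.cos_neg, Real.sin_neg]
    rw [hc]
    have hpc : ((π : ℝ) : ℂ) ≠ 0 := by exact_mod_cast hπ
    have hxc : ((ξ : ℝ) : ℂ) ≠ 0 := by exact_mod_cast hξ
    field_simp
    ring_nf
    field_simp
    ring_nf
    push_cast
    field_simp
    ring
  · rw [if_neg hst]
    have : Set.Icc (-a) a = ∅ := by
      apply Set.Icc_eq_empty
      simp only [ha]
      intro hcon
      have : |s| ≤ t := by linarith
      exact hst this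
    rw [this]
    simp
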